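/- arXiv:1602.00247 — 2 statements merged into one kernel-verified Lean document; each statement's English description precedes it below -/
import Mathlib

section
/- Let ε > 0, c > 0 and let J : [0,1] → ℝ be measurable with r ↦ r³ J(r) integrable on [0,1]. Then (4π/((4π/3) ε³)) ∫₀^ε ∫_z^ε ∫₀^{arccos(z/ζ)} (c J(ζ/ε)/ε) ζ² sin φ dφ dζ dz = (3/2) c ∫₀¹ r³ J(r) dr. In particular, the left-hand side is independent of ε, and equals (2ω₂/ω₃) M c with M = ∫₀¹ r³ J(r) dr, ω₂ = π, ω₃ = 4π/3. -/
open MeasureTheory Real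

/-- Three-dimensional spherical-coordinate evaluation of the critical
energy release rate:
`(4π/((4π/3)ε³)) ∫₀^ε ∫_z^ε ∫₀^{arccos(z/ζ)} (c J(ζ/ε)/ε) ζ² sin φ dφ dζ dz
  = (3/2) c ∫₀¹ r³ J(r) dr`,
independent of `ε`, and `(3/2) c M = (2ω₂/ω₃) M c` with `ω₂ = π`, `ω₃ = 4π/3`,
`M = ∫₀¹ r³ J(r) dr`. -/
theorem energy_release_rate_3d (ε : ℝ) (hε : 0 < ε) (c : ℝ) (hc : 0 < c)
    (J : ℝ → ℝ) (hJm : Measurable J)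
    (hJint : IntegrableOn (fun r : ℝ => r ^ 3 * J r) (Set.Icc (0 : ℝ) 1)) :
    (4 * π / ((4 * π / 3) * ε ^ 3)) *
        ∫ z in (0 : ℝ)..ε, ∫ ζ in z..ε, ∫ φ in (0 : ℝ)..(Real.arccos (z / ζ)),
          (c * J (ζ / ε) / ε) * ζ ^ 2 * Real.sin φ
      = (3 / 2) * c * ∫ r in Set.Icc (0 : ℝ) 1, r ^ 3 * J r ∧
    (3 / 2) * c * (∫ r in Set.Icc (0 : ℝ) 1, r ^ 3 * J r)
      = (2 * π / (4 * π / 3)) * (∫ r in Set.Icc (0 : ℝ) 1, r ^ 3 * J r) * c := by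
  have hεne : ε ≠ 0 := hε.ne'
  set g : ℝ → ℝ := fun r => r ^ 3 * J r with hgdef
  set F : ℝ → ℝ := fun ζ => c * J (ζ / ε) / ε with hFdef
  set h : ℝ → ℝ → ℝ := fun z ζ => if z < ζ then F ζ * (ζ ^ 2 - z * ζ) else 0 with hhdef
  -- basic integrability of g
  have hgI : IntervalIntegrable g volume 0 1 := by
    rw [intervalIntegrable_iff_integrableOn_Ioc_of_le zero_le_one]
    exact hJint.mono_set Set.Ioc_subset_Icc_self
  have hgε : IntervalIntegrable (fun t => g (t / ε)) volume 0 ε := by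
    have h1 := hgI.comp_mul_right (c := ε⁻¹)
    simp only [div_eq_mul_inv] at h1 ⊢
    simpa [inv_inv] using h1
  have hfun : ∀ ζ : ℝ, ζ ^ 3 * J (ζ / ε) = ε ^ 3 * g (ζ / ε) := by
    intro ζ
    simp only [hgdef, div_pow]
    field_simp
  have hG : IntegrableOn (fun ζ => ζ ^ 3 * J (ζ / ε)) (Set.Ioc 0 ε) := by
    have h1 : IntervalIntegrable (fun t => ε ^ 3 * g (t / ε)) volume 0 ε := hgε.const_mul _
    rw [intervalIntegrable_iff_integrableOn_Ioc_of_le hε.le] at h1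
    exact h1.congr_fun (fun ζ _ => (hfun ζ).symm) measurableSet_Ioc
  have hval : (∫ ζ in (0:ℝ)..ε, ζ ^ 3 * J (ζ / ε)) = ε ^ 4 * ∫ r in (0:ℝ)..1, g r := by
    rw [intervalIntegral.integral_congr (g := fun ζ => ε ^ 3 * g (ζ / ε))
      (fun ζ _ => hfun ζ), intervalIntegral.integral_const_mul,
      intervalIntegral.integral_comp_div (a := 0) (b := ε) (f := g) hεne]
    rw [zero_div, div_self hεne, smul_eq_mul]
    ring
  -- measurability
  have hFm : Measurable F := ((hJm.comp (measurable_id.div_const ε)).const_mul c).div_const ε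
  have huncurry : Measurable (Function.uncurry h) := by
    have : Function.uncurry h = fun p : ℝ × ℝ =>
        if p.1 < p.2 then F p.2 * (p.2 ^ 2 - p.1 * p.2) else 0 := rfl
    rw [this]
    exact Measurable.ite (measurableSet_lt measurable_fst measurable_snd)
      ((hFm.comp measurable_snd).mul
        ((measurable_snd.pow_const 2).sub (measurable_fst.mul measurable_snd)))
      measurable_const
  -- sections are integrable
  have hsect : ∀ ζ : ℝ, Integrable (fun z => h z ζ) (volume.restrict (Set.Ioc 0 ε)) := by
    intro ζ
    have hcont : Continuous fun z : ℝ => F ζ * (ζ ^ 2 - z * ζ) := by fun_prop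
    have hI : IntegrableOn (fun z : ℝ => F ζ * (ζ ^ 2 - z * ζ)) (Set.Ioc 0 ε) :=
      hcont.integrableOn_Ioc
    have := hI.indicator (measurableSet_Iio (a := ζ))
    refine this.congr (Filter.Eventually.of_forall fun z => ?_)
    by_cases hz : z < ζ <;> simp [hhdef, Set.indicator_apply, hz]
  -- section equality for h: fun z => h z ζ is the indicator of Iio ζ
  have hsecteq : ∀ ζ : ℝ, (fun z => h z ζ) =
      (Set.Iio ζ).indicator (fun z => F ζ * (ζ ^ 2 - z * ζ)) := by
    intro ζ; funext z
    by_cases hz : z < ζ <;> simp [hhdef, Set.indicator_apply, hz]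
  -- inner z-integral evaluation
  have hinner : ∀ ζ ∈ Set.Ioc (0:ℝ) ε,
      (∫ z in Set.Ioc (0:ℝ) ε, h z ζ) = c / (2 * ε) * (ζ ^ 3 * J (ζ / ε)) := by
    rintro ζ ⟨hζ0, hζε⟩
    rw [show (fun z => h z ζ) = (Set.Iio ζ).indicator (fun z => F ζ * (ζ ^ 2 - z * ζ)) from
      hsecteq ζ, setIntegral_indicator measurableSet_Iio]
    have hset : Set.Ioc (0:ℝ) ε ∩ Set.Iio ζ = Set.Ioo 0 ζ := by
      ext z
      simp only [Set.mem_inter_iff, Set.mem_Ioc, Set.mem_Iio, Set.mem_Ioo]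
      exact ⟨fun h => ⟨h.1.1, h.2⟩, fun h => ⟨⟨h.1, (h.2.le.trans hζε)⟩, h.2⟩⟩
    rw [hset, ← integral_Ioc_eq_integral_Ioo, ← intervalIntegral.integral_of_le hζ0.le,
      intervalIntegral.integral_const_mul]
    have hlin : IntervalIntegrable (fun z : ℝ => z * ζ) volume 0 ζ :=
      (continuous_id.mul continuous_const).intervalIntegrable 0 ζ
    rw [intervalIntegral.integral_sub intervalIntegrable_const hlin,
      intervalIntegral.integral_const, intervalIntegral.integral_mul_const, integral_id,
      smul_eq_mul]
    simp only [hFdef]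
    field_simp
    ring
  -- bound for the iterated norm integral
  have hbound : ∀ ζ ∈ Set.Ioc (0:ℝ) ε,
      (∫ z in Set.Ioc (0:ℝ) ε, ‖h z ζ‖) ≤ c / ε * |ζ ^ 3 * J (ζ / ε)| := by
    rintro ζ ⟨hζ0, hζε⟩
    have hle : ∀ z ∈ Set.Ioc (0:ℝ) ε,
        ‖h z ζ‖ ≤ (Set.Iio ζ).indicator (fun _ => ‖F ζ‖ * ζ ^ 2) z := by
      rintro z ⟨hz0, _⟩
      by_cases hz : z < ζ
      · simp only [hhdef, if_pos hz, Set.indicator_of_mem (Set.mem_Iio.2 hz)]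
        rw [norm_mul]
        refine mul_le_mul_of_nonneg_left ?_ (norm_nonneg _)
        rw [Real.norm_eq_abs, abs_of_nonneg (by nlinarith)]
        nlinarith
      · rw [Set.indicator_of_notMem (by simpa using hz : z ∉ Set.Iio ζ)]
        simp [hhdef, hz]
    have hIind : IntegrableOn ((Set.Iio ζ).indicator (fun _ : ℝ => ‖F ζ‖ * ζ ^ 2))
        (Set.Ioc 0 ε) :=
      ((integrableOn_const measure_Ioc_lt_top.ne).indicator measurableSet_Iio)
    have h1 : (∫ z in Set.Ioc (0:ℝ) ε, ‖h z ζ‖) ≤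
        ∫ z in Set.Ioc (0:ℝ) ε, (Set.Iio ζ).indicator (fun _ => ‖F ζ‖ * ζ ^ 2) z :=
      setIntegral_mono_on (hsect ζ).norm hIind measurableSet_Ioc hle
    refine h1.trans ?_
    rw [setIntegral_indicator measurableSet_Iio]
    have hset : Set.Ioc (0:ℝ) ε ∩ Set.Iio ζ = Set.Ioo 0 ζ := by
      ext z
      simp only [Set.mem_inter_iff, Set.mem_Ioc, Set.mem_Iio, Set.mem_Ioo]
      exact ⟨fun h => ⟨h.1.1, h.2⟩, fun h => ⟨⟨h.1, (h.2.le.trans hζε)⟩, h.2⟩⟩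
    rw [hset, setIntegral_const, Real.volume_real_Ioo_of_le hζ0.le, smul_eq_mul]
    have hFabs : ‖F ζ‖ = c / ε * |J (ζ / ε)| := by
      simp only [hFdef, Real.norm_eq_abs, abs_div, abs_mul, abs_of_pos hc, abs_of_pos hε]
      ring
    rw [hFabs, abs_mul, abs_of_nonneg (by positivity : (0:ℝ) ≤ ζ ^ 3)]
    rw [sub_zero]
    nlinarith [abs_nonneg (J (ζ / ε)), mul_nonneg (abs_nonneg (J (ζ/ε))) (sq_nonneg ζ)]
  -- integrability on the product
  have hD : Integrable (fun ζ => c / ε * |ζ ^ 3 * J (ζ / ε)|)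
      (volume.restrict (Set.Ioc 0 ε)) := by
    have h2 := hG.norm.const_mul (c / ε)
    simpa only [Real.norm_eq_abs] using h2
  have hmeasInt : AEStronglyMeasurable
      (fun ζ => ∫ z in Set.Ioc (0:ℝ) ε, ‖h z ζ‖) (volume.restrict (Set.Ioc 0 ε)) := by
    have : StronglyMeasurable fun ζ => ∫ z in Set.Ioc (0:ℝ) ε, ‖Function.uncurry h (z, ζ)‖ :=
      (huncurry.norm.stronglyMeasurable).integral_prod_left'
    exact this.aestronglyMeasurable
  have hIb : Integrable (fun ζ => ∫ z in Set.Ioc (0:ℝ) ε, ‖h z ζ‖)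
      (volume.restrict (Set.Ioc 0 ε)) := by
    refine hD.mono hmeasInt ?_
    rw [ae_restrict_iff' measurableSet_Ioc]
    refine Filter.Eventually.of_forall fun ζ hζ => ?_
    rw [Real.norm_eq_abs, abs_of_nonneg (integral_nonneg fun z => norm_nonneg _),
      Real.norm_eq_abs, abs_of_nonneg (by positivity)]
    exact hbound ζ hζ
  have hH : Integrable (Function.uncurry h)
      ((volume.restrict (Set.Ioc (0:ℝ) ε)).prod (volume.restrict (Set.Ioc (0:ℝ) ε))) := by
    refine (integrable_prod_iff' huncurry.aestronglyMeasurable).2 ⟨?_, ?_⟩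
    · exact Filter.Eventually.of_forall fun ζ => hsect ζ
    · exact hIb
  -- main computation for the triple integral
  have hmain : (∫ z in (0:ℝ)..ε, ∫ ζ in z..ε, ∫ φ in (0:ℝ)..(Real.arccos (z / ζ)),
      (c * J (ζ / ε) / ε) * ζ ^ 2 * Real.sin φ)
      = c / (2 * ε) * (ε ^ 4 * ∫ r in (0:ℝ)..1, g r) := by
    rw [intervalIntegral.integral_of_le hε.le]
    have step1 : ∀ z ∈ Set.Ioc (0:ℝ) ε,
        (∫ ζ in z..ε, ∫ φ in (0:ℝ)..(Real.arccos (z / ζ)),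
          (c * J (ζ / ε) / ε) * ζ ^ 2 * Real.sin φ)
        = ∫ ζ in Set.Ioc (0:ℝ) ε, h z ζ := by
      rintro z ⟨hz0, hzε⟩
      have step_a : (∫ ζ in z..ε, ∫ φ in (0:ℝ)..(Real.arccos (z / ζ)),
          (c * J (ζ / ε) / ε) * ζ ^ 2 * Real.sin φ)
          = ∫ ζ in z..ε, F ζ * (ζ ^ 2 - z * ζ) := by
        refine intervalIntegral.integral_congr fun ζ hζ => ?_
        rw [Set.uIcc_of_le hzε] at hζ
        obtain ⟨hζ1, hζ2⟩ := hζ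
        have hζpos : 0 < ζ := lt_of_lt_of_le hz0 hζ1
        have h1 : (-1 : ℝ) ≤ z / ζ := le_trans (by norm_num) (div_nonneg hz0.le hζpos.le)
        have h2 : z / ζ ≤ 1 := (div_le_one hζpos).2 hζ1
        rw [intervalIntegral.integral_const_mul, integral_sin, Real.cos_zero,
          Real.cos_arccos h1 h2]
        simp only [hFdef]
        field_simp
      rw [step_a, intervalIntegral.integral_of_le hzε]
      have heq2 : ∀ ζ ∈ Set.Ioc (0:ℝ) ε,
          h z ζ = (Set.Ioc z ε).indicator (fun ζ => F ζ * (ζ ^ 2 - z * ζ)) ζ := by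
        intro ζ hζ
        obtain ⟨hζ0, hζε⟩ := hζ
        by_cases hlt : z < ζ
        · rw [Set.indicator_of_mem (Set.mem_Ioc.2 ⟨hlt, hζε⟩)]
          simp [hhdef, hlt]
        · rw [Set.indicator_of_notMem (fun hm => hlt (Set.mem_Ioc.1 hm).1)]
          simp [hhdef, hlt]
      rw [setIntegral_congr_fun measurableSet_Ioc heq2,
        setIntegral_indicator measurableSet_Ioc,
        Set.inter_eq_self_of_subset_right (Set.Ioc_subset_Ioc_left hz0.le)]
    rw [setIntegral_congr_fun measurableSet_Ioc step1,
      MeasureTheory.integral_integral_swap hH,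
      setIntegral_congr_fun measurableSet_Ioc hinner,
      MeasureTheory.integral_const_mul, ← intervalIntegral.integral_of_le hε.le, hval]
  constructor
  · rw [hmain]
    have hM : (∫ r in Set.Icc (0:ℝ) 1, r ^ 3 * J r) = ∫ r in (0:ℝ)..1, g r := by
      rw [integral_Icc_eq_integral_Ioc, ← intervalIntegral.integral_of_le zero_le_one]
    rw [hM]
    field_simp
  · have hπ : π ≠ 0 := Real.pi_ne_zero
    field_simp
    ring
end

section
/- Let d ≥ 2, ε > 0, x ∈ ℝ^d, n a unit vector, and set H⁻ = {y ∈ B_ε(x) : (y−x)·n < 0}. Let J : [0,1] → [0,∞) be measurable and let Ψ : [0,∞) → ℝ be twice continuously differentiable such that there exists r_c > 0 with Ψ'(r) + 2rΨ''(r) ≥ 0 for all 0 ≤ r ≤ r_c. Let u* : ℝ^d → ℝ^d be measurable, let S(y) = ((u*(y) − u*(x))·e)/|y−x| with e = (y−x)/|y−x| denote the bond strain, and suppose the function y ↦ (1/|y−x|)(2J(|y−x|/ε)/ε)(Ψ'(r(y)) + 2 r(y) Ψ''(r(y))) with r(y) = |y−x| S(y)² is integrable on H⁻. Define the stability tensor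 A_n(x) = ∫_{H⁻} (1/|y−x|)(2J(|y−x|/ε)/ε)(Ψ'(r(y)) + 2 r(y) Ψ''(r(y))) e ⊗ e dy. If there exists a nonzero vector w ∈ ℝ^d with w · A_n(x) w < 0 (in particular, if A_n(x) has a negative eigenvalue), then the set {y ∈ H⁻ : |y−x| S(y)² > r_c} — equivalently the set of bonds with |S(y)| > S_c(y) = √(r_c/|y−x|) — has positive Lebesgue measure. -/
open MeasureTheory Matrix
open scoped RealInnerProductSpace

lemma euclid_abs_apply_le_norm {d : ℕ} (v : EuclideanSpace ℝ (Fin d)) (i : Fin d) :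
    |v i| ≤ ‖v‖ := by
  rw [EuclideanSpace.norm_eq]
  have h : |v i| ^ 2 ≤ ∑ j, ‖v j‖ ^ 2 := by
    have := Finset.single_le_sum (f := fun j => ‖v j‖ ^ 2) (fun j _ => by positivity)
      (Finset.mem_univ i)
    simpa [Real.norm_eq_abs, sq_abs] using this
  calc |v i| = Real.sqrt (|v i| ^ 2) := by rw [Real.sqrt_sq (abs_nonneg _)]
    _ ≤ _ := Real.sqrt_le_sqrt h

/-- If the peridynamic stability tensor
`A_n(x) = ∫_{H⁻} (1/|y−x|)(2J(|y−x|/ε)/ε)(Ψ'(r(y)) + 2r(y)Ψ''(r(y))) e⊗e dy`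
(with `H⁻` the half-neighborhood `{y ∈ B_ε(x) : (y−x)·n < 0}`, bond strain
`S(y) = ((u*(y)−u*(x))·e)/|y−x|`, `e = (y−x)/|y−x|`, `r(y) = |y−x|S(y)²`) has a direction
`w ≠ 0` with `w·A_n(x)w < 0`, and `Ψ'(r) + 2rΨ''(r) ≥ 0 for 0 ≤ r ≤ r_c`, then the set of
bonds strained beyond critical, `{y ∈ H⁻ : |y−x|S(y)² > r_c}`, has positive Lebesgue
measure. -/
theorem instability_implies_supercritical_bonds (d : ℕ) (hd : 2 ≤ d)
    (ε : ℝ) (hε : 0 < ε)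
    (x : EuclideanSpace ℝ (Fin d)) (n : EuclideanSpace ℝ (Fin d)) (hn : ‖n‖ = 1)
    (J : ℝ → ℝ) (hJm : Measurable J) (hJnn : ∀ r ∈ Set.Icc (0 : ℝ) 1, 0 ≤ J r)
    (Ψ : ℝ → ℝ) (hΨ : ContDiff ℝ 2 Ψ)
    (r_c : ℝ) (hrc : 0 < r_c)
    (hstab : ∀ r : ℝ, 0 ≤ r → r ≤ r_c → 0 ≤ deriv Ψ r + 2 * r * deriv (deriv Ψ) r)
    (ustar : EuclideanSpace ℝ (Fin d) → EuclideanSpace ℝ (Fin d)) (hu : Measurable ustar)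
    (S : EuclideanSpace ℝ (Fin d) → ℝ)
    (hS : ∀ y, S y = ⟪ustar y - ustar x, ‖y - x‖⁻¹ • (y - x)⟫ / ‖y - x‖)
    (f : EuclideanSpace ℝ (Fin d) → ℝ)
    (hf : ∀ y, f y =
      (1 / ‖y - x‖) * (2 * J (‖y - x‖ / ε) / ε) *
        (deriv Ψ (‖y - x‖ * (S y) ^ 2)
          + 2 * (‖y - x‖ * (S y) ^ 2) * deriv (deriv Ψ) (‖y - x‖ * (S y) ^ 2)))
    (hfint : IntegrableOn f
      {y : EuclideanSpace ℝ (Fin d) | y ∈ Metric.ball x ε ∧ ⟪y - x, n⟫ < 0} volume)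
    (A : Matrix (Fin d) (Fin d) ℝ)
    (hA : ∀ i j, A i j =
      ∫ y in {y : EuclideanSpace ℝ (Fin d) | y ∈ Metric.ball x ε ∧ ⟪y - x, n⟫ < 0},
        f y * ((‖y - x‖⁻¹ • (y - x)) i) * ((‖y - x‖⁻¹ • (y - x)) j))
    (w : Fin d → ℝ) (hw : w ≠ 0) (hneg : w ⬝ᵥ A.mulVec w < 0) :
    0 < volume {y : EuclideanSpace ℝ (Fin d) |
        (y ∈ Metric.ball x ε ∧ ⟪y - x, n⟫ < 0) ∧ r_c < ‖y - x‖ * (S y) ^ 2} := by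
  -- notation
  set D : Set (EuclideanSpace ℝ (Fin d)) :=
    {y | y ∈ Metric.ball x ε ∧ ⟪y - x, n⟫ < 0} with hDdef
  set E : EuclideanSpace ℝ (Fin d) → EuclideanSpace ℝ (Fin d) :=
    fun y => ‖y - x‖⁻¹ • (y - x) with hEdef
  have hDmeas : MeasurableSet D := by
    have h1 : Continuous fun y : EuclideanSpace ℝ (Fin d) => (⟪y - x, n⟫ : ℝ) :=
      (continuous_id.sub continuous_const).inner continuous_const
    exact (Metric.isOpen_ball.inter (isOpen_lt h1 continuous_const)).measurableSet
  -- continuity/measurability facts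
  have hnormc : Continuous fun y : EuclideanSpace ℝ (Fin d) => ‖y - x‖ :=
    (continuous_id.sub continuous_const).norm
  have hnorm : Measurable fun y : EuclideanSpace ℝ (Fin d) => ‖y - x‖ := hnormc.measurable
  have hc1 : Continuous (deriv Ψ) := by
    have h2 : ContDiff ℝ ((1:ℕ∞)+1) Ψ := by exact_mod_cast hΨ
    exact ((contDiff_succ_iff_deriv).mp h2).2.2.continuous
  have hc2 : Continuous (deriv (deriv Ψ)) := by
    have h2 : ContDiff ℝ ((1:ℕ∞)+1) Ψ := by exact_mod_cast hΨ
    have h1 : ContDiff ℝ 1 (deriv Ψ) := ((contDiff_succ_iff_deriv).mp h2).2.2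
    have h0 : ContDiff ℝ ((0:ℕ∞)+1) (deriv Ψ) := by exact_mod_cast h1
    exact ((contDiff_succ_iff_deriv).mp h0).2.2.continuous
  have hSm : Measurable S := by
    have : Measurable fun y =>
        (⟪ustar y - ustar x, ‖y - x‖⁻¹ • (y - x)⟫ : ℝ) / ‖y - x‖ := by
      have hEm : Measurable E := hnorm.inv.smul (continuous_id.sub continuous_const).measurable
      exact ((hu.sub measurable_const).inner hEm).div hnorm
    simpa [funext hS] using this
  have hfm : Measurable f := by
    have hG : Continuous fun r : ℝ => deriv Ψ r + 2 * r * deriv (deriv Ψ) r :=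
      hc1.add (((continuous_const.mul continuous_id).mul hc2))
    have mr : Measurable fun y : EuclideanSpace ℝ (Fin d) => ‖y - x‖ * (S y) ^ 2 :=
      hnorm.mul (hSm.pow_const 2)
    have : Measurable fun y : EuclideanSpace ℝ (Fin d) =>
        (1 / ‖y - x‖) * (2 * J (‖y - x‖ / ε) / ε) *
        (deriv Ψ (‖y - x‖ * (S y) ^ 2)
          + 2 * (‖y - x‖ * (S y) ^ 2) * deriv (deriv Ψ) (‖y - x‖ * (S y) ^ 2)) := by
      exact ((measurable_const.div hnorm).mul
        (((hJm.comp (hnorm.div_const ε)).const_mul 2).div_const ε)).mul (hG.measurable.comp mr)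
    simpa [funext hf] using this
  have hEi : ∀ i, Measurable fun y => E y i := by
    intro i
    have : Measurable fun y : EuclideanSpace ℝ (Fin d) => ‖y - x‖⁻¹ * (y - x) i :=
      hnorm.inv.mul ((EuclideanSpace.proj i).continuous.comp (continuous_id.sub continuous_const)).measurable
    exact this
  have hEbd : ∀ y i, |E y i| ≤ 1 := by
    intro y i
    refine (euclid_abs_apply_le_norm (E y) i).trans ?_
    rw [hEdef, norm_smul, norm_inv, norm_norm]
    rcases eq_or_ne (‖y - x‖) 0 with h | h
    · simp [h]
    · rw [inv_mul_cancel₀ h]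
  -- integrability of each entry integrand
  have hint : ∀ i j, IntegrableOn (fun y => f y * E y i * E y j) D volume := by
    intro i j
    refine Integrable.mono' hfint.norm ?_ ?_
    · exact ((hfm.mul (hEi i)).mul (hEi j)).aestronglyMeasurable
    · refine Filter.Eventually.of_forall fun y => ?_
      rw [Real.norm_eq_abs, abs_mul, abs_mul, Real.norm_eq_abs]
      calc |f y| * |E y i| * |E y j| ≤ |f y| * 1 * 1 := by
            apply mul_le_mul (mul_le_mul le_rfl (hEbd y i) (abs_nonneg _) (abs_nonneg _))
              (hEbd y j) (abs_nonneg _) (by positivity)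
        _ = |f y| := by ring
  -- key identity
  have key : w ⬝ᵥ A.mulVec w = ∫ y in D, f y * (∑ i, w i * E y i) ^ 2 := by
    have hpt : ∀ y, f y * (∑ i, w i * E y i) ^ 2
        = ∑ i, ∑ j, (w i * w j) * (f y * E y i * E y j) := by
      intro y
      rw [sq, Finset.sum_mul_sum, Finset.mul_sum]
      refine Finset.sum_congr rfl fun i _ => ?_
      rw [Finset.mul_sum]
      exact Finset.sum_congr rfl fun j _ => by ring
    calc w ⬝ᵥ A.mulVec w = ∑ i, ∑ j, (w i * w j) * A i j := by
          simp only [dotProduct, Matrix.mulVec, Finset.mul_sum]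
          exact Finset.sum_congr rfl fun i _ => Finset.sum_congr rfl fun j _ => by ring
      _ = ∑ i, ∑ j, ∫ y in D, (w i * w j) * (f y * E y i * E y j) := by
          refine Finset.sum_congr rfl fun i _ => Finset.sum_congr rfl fun j _ => ?_
          rw [hA i j, ← integral_const_mul]
      _ = ∫ y in D, ∑ i, ∑ j, (w i * w j) * (f y * E y i * E y j) := by
          rw [integral_finset_sum]
          · exact Finset.sum_congr rfl fun i _ => (integral_finset_sum _
              (fun j _ => ((hint i j).const_mul _))).symm
          · exact fun i _ => integrable_finset_sum _ fun j _ => (hint i j).const_mul _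
      _ = ∫ y in D, f y * (∑ i, w i * E y i) ^ 2 := by
          exact integral_congr_ae (Filter.Eventually.of_forall fun y => (hpt y).symm)
  -- conclude by contradiction
  by_contra hcon
  rw [not_lt, le_zero_iff] at hcon
  have hbad : ∀ᵐ y ∂volume, y ∉ {y : EuclideanSpace ℝ (Fin d) |
      (y ∈ Metric.ball x ε ∧ ⟪y - x, n⟫ < 0) ∧ r_c < ‖y - x‖ * (S y) ^ 2} :=
    measure_eq_zero_iff_ae_notMem.mp hcon
  have hmemD : ∀ᵐ y ∂(volume.restrict D), y ∈ D := ae_restrict_mem hDmeas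
  have hnn : ∀ᵐ y ∂(volume.restrict D), 0 ≤ f y * (∑ i, w i * E y i) ^ 2 := by
    filter_upwards [hmemD, ae_restrict_of_ae hbad] with y hyD hyb
    have hle : ‖y - x‖ * (S y) ^ 2 ≤ r_c := by
      by_contra hgt
      exact hyb ⟨hyD, lt_of_not_ge hgt⟩
    have hfy : 0 ≤ f y := by
      rw [hf y]
      have hJ0 : 0 ≤ J (‖y - x‖ / ε) := by
        apply hJnn
        constructor
        · positivity
        · have : ‖y - x‖ < ε := by
            have := hyD.1
            rwa [Metric.mem_ball, dist_eq_norm] at this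
          exact (div_le_one hε).mpr this.le
      have h3 := hstab (‖y - x‖ * (S y) ^ 2) (by positivity) hle
      have h1 : (0:ℝ) ≤ 1 / ‖y - x‖ := by positivity
      have h2 : (0:ℝ) ≤ 2 * J (‖y - x‖ / ε) / ε := by positivity
      exact mul_nonneg (mul_nonneg h1 h2) h3
    positivity
  have : (0:ℝ) ≤ w ⬝ᵥ A.mulVec w := key ▸ integral_nonneg_of_ae hnn
  linarith
end
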